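/- For all formulas A and B, the inversion rules (from Γ, A→B ⇒ Δ infer Γ, B ⇒ Δ), (from Γ, A→B ⇒ Δ infer Γ ⇒ A, Δ), (from Γ ⇒ A→B, Δ infer Γ, A ⇒ B, Δ), (from Γ ⇒ ⊥, Δ infer Γ ⇒ Δ), and (from Γ ⇒ □A, Δ infer Γ ⇒ A, Δ) are strongly admissible in Grz∞+cut. -/

import Mathlib

/-- Modal formulas of the Grzegorczyk logic: ⊥, atoms, →, □. -/
inductive Formula : Type
  | bot : Formula
  | atom : ℕ → Formula
  | imp : Formula → Formula → Formula
  | box : Formula → Formula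
deriving DecidableEq

/-- A sequent Γ ⇒ Δ is a pair of finite multisets of formulas. -/
abbrev Sequent : Type := Multiset Formula × Multiset Formula

/-- Names of the inference rules of Grz∞ + cut (including the two kinds of initial sequents). -/
inductive Rule : Type
  | ax | axBot | impL | impR | refl | box | cut
deriving DecidableEq

/-- □Π for a multiset Π. -/
def boxed (P : Multiset Formula) : Multiset Formula := P.map Formula.box

/-- `Inst r s p₁ p₂` : the rule `r` has a (correct) instance with conclusion `s`,
first premise `p₁` and second premise `p₂` (`none` = no such premise). -/
inductive Inst : Rule → Sequent → Option Sequent → Option Sequent → Prop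
  | ax (Γ Δ : Multiset Formula) (p : ℕ) :
      Inst .ax (Formula.atom p ::ₘ Γ, Formula.atom p ::ₘ Δ) none none
  | axBot (Γ Δ : Multiset Formula) :
      Inst .axBot (Formula.bot ::ₘ Γ, Δ) none none
  | impL (Γ Δ : Multiset Formula) (A B : Formula) :
      Inst .impL (Formula.imp A B ::ₘ Γ, Δ) (some (B ::ₘ Γ, Δ)) (some (Γ, A ::ₘ Δ))
  | impR (Γ Δ : Multiset Formula) (A B : Formula) :
      Inst .impR (Γ, Formula.imp A B ::ₘ Δ) (some (A ::ₘ Γ, B ::ₘ Δ)) none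
  | refl (Γ Δ : Multiset Formula) (A : Formula) :
      Inst .refl (Formula.box A ::ₘ Γ, Δ) (some (A ::ₘ Formula.box A ::ₘ Γ, Δ)) none
  | box (Γ Δ : Multiset Formula) (A : Formula) (P : Multiset Formula) :
      Inst .box (Γ + boxed P, Formula.box A ::ₘ Δ) (some (Γ + boxed P, A ::ₘ Δ))
        (some (boxed P, {A}))
  | cut (Γ Δ : Multiset Formula) (A : Formula) :
      Inst .cut (Γ, Δ) (some (Γ, A ::ₘ Δ)) (some (A ::ₘ Γ, Δ))

/-- A labelling of tree addresses (lists of booleans; `true` = second/right child)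
by a rule name together with a sequent; `none` means the address is outside the tree. -/
abbrev Lab : Type := List Bool → Option (Rule × Sequent)

/-- The labelling of the subtree at child `i`. -/
def shift (i : Bool) (l : Lab) : Lab := fun a => l (i :: a)

/-- An ∞-proof in Grz∞ + cut: a possibly infinite tree of sequents built according to
the rules, in which every infinite branch passes through the right premise of the
rule (□) infinitely many times. -/
structure InfProof : Type where
  lab : Lab
  root_some : (lab []).isSome
  nojunk : ∀ (a : List Bool) (i : Bool), lab a = none → lab (a ++ [i]) = none
  step : ∀ (a : List Bool) (r : Rule) (s : Sequent), lab a = some (r, s) →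
      Inst r s ((lab (a ++ [false])).map Prod.snd) ((lab (a ++ [true])).map Prod.snd)
  branch : ∀ f : ℕ → Bool, (∀ n : ℕ, (lab ((List.range n).map f)).isSome) →
      ∀ N : ℕ, ∃ n : ℕ, N ≤ n ∧ f n = true ∧
        (lab ((List.range n).map f)).map Prod.fst = some Rule.box

/-- The sequent at the root of an ∞-proof. -/
def rootSeq (π : InfProof) : Sequent := ((π.lab []).map Prod.snd).getD (0, 0)

/-- `Proves π S` : the ∞-proof `π` is an ∞-proof of the sequent `S`. -/
def Proves (π : InfProof) (S : Sequent) : Prop := ∃ r : Rule, π.lab [] = some (r, S)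

/-- An ∞-proof contains no application of the cut rule (i.e. it is a proof of Grz∞). -/
def NoCut (π : InfProof) : Prop := ∀ (a : List Bool) (r : Rule) (s : Sequent),
  π.lab a = some (r, s) → r ≠ Rule.cut

/-- Membership of an address in the main fragment: no proper passage through a
right premise of (□) strictly below it. -/
def InMain (l : Lab) (a : List Bool) : Prop :=
  (l a).isSome ∧ ∀ (b c : List Bool), a = b ++ true :: c →
    (l b).map Prod.fst = some Rule.box → c = []

/-- The local height |π| : the length of the longest branch in the main fragment. -/
noncomputable def height (l : Lab) : ℕ := sSup {n : ℕ | ∃ a : List Bool, InMain l a ∧ a.length = n}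

/-- The relations ∼ₙ on ∞-proofs (presented on labellings), defined inductively:
π ∼₀ τ always; a single-node proof is ∼ₙ-related to itself; proofs ending in the same
instance of (→L), (cut), (→R), (refl) are ∼ₙ-related when their immediate subproofs are;
proofs ending in the same instance of (□) are ∼ₙ₊₁-related when the left-premise subproofs
are ∼ₙ₊₁-related and the right-premise subproofs are ∼ₙ-related. -/
inductive Sim : ℕ → Lab → Lab → Prop
  | zero (l m : Lab) : Sim 0 l m
  | leaf (n : ℕ) (l : Lab) : height l = 0 → Sim n l l
  | bin (n : ℕ) (l m : Lab) (r : Rule) (s : Sequent) :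
      (r = Rule.impL ∨ r = Rule.cut) →
      l [] = some (r, s) → m [] = some (r, s) →
      (l [false]).map Prod.snd = (m [false]).map Prod.snd →
      (l [true]).map Prod.snd = (m [true]).map Prod.snd →
      Sim n (shift false l) (shift false m) → Sim n (shift true l) (shift true m) →
      Sim n l m
  | un (n : ℕ) (l m : Lab) (r : Rule) (s : Sequent) :
      (r = Rule.impR ∨ r = Rule.refl) →
      l [] = some (r, s) → m [] = some (r, s) →
      (l [false]).map Prod.snd = (m [false]).map Prod.snd →
      Sim n (shift false l) (shift false m) →
      Sim n l m
  | box (n : ℕ) (l m : Lab) (s : Sequent) :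
      l [] = some (Rule.box, s) → m [] = some (Rule.box, s) →
      (l [false]).map Prod.snd = (m [false]).map Prod.snd →
      (l [true]).map Prod.snd = (m [true]).map Prod.snd →
      Sim (n + 1) (shift false l) (shift false m) → Sim n (shift true l) (shift true m) →
      Sim (n + 1) l m

/-- The sets 𝒫ₙ of ∞-proofs (presented on labellings), defined inductively:
𝒫₀ is everything; single-node proofs are in every 𝒫ₙ; (→L), (→R), (refl) preserve
membership in 𝒫ₙ; a proof ending in (□) with left-premise subproof in 𝒫ₙ₊₁ and
right-premise subproof in 𝒫ₙ is in 𝒫ₙ₊₁. -/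
inductive MemP : ℕ → Lab → Prop
  | zero (l : Lab) : MemP 0 l
  | leaf (n : ℕ) (l : Lab) : height l = 0 → MemP n l
  | bin (n : ℕ) (l : Lab) (s : Sequent) :
      l [] = some (Rule.impL, s) →
      MemP n (shift false l) → MemP n (shift true l) → MemP n l
  | un (n : ℕ) (l : Lab) (r : Rule) (s : Sequent) :
      (r = Rule.impR ∨ r = Rule.refl) →
      l [] = some (r, s) → MemP n (shift false l) → MemP n l
  | box (n : ℕ) (l : Lab) (s : Sequent) :
      l [] = some (Rule.box, s) →
      MemP (n + 1) (shift false l) → MemP n (shift true l) → MemP (n + 1) l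

/- The metric d(π,τ) = 2^(−sup{n : π ∼ₙ τ}), with 2^(−∞) = 0. -/
open Classical in
noncomputable def pdist (π τ : InfProof) : ℝ :=
  if ∀ n : ℕ, Sim n π.lab τ.lab then 0
  else (2 : ℝ) ^ (-((sSup {n : ℕ | Sim n π.lab τ.lab} : ℕ) : ℤ))

/-- A mapping on ∞-proofs is nonexpansive if it preserves all relations ∼ₙ. -/
def Nonexpansive (f : InfProof → InfProof) : Prop :=
  ∀ (n : ℕ) (π τ : InfProof), Sim n π.lab τ.lab → Sim n (f π).lab (f τ).lab

/-- A mapping is adequate if it is nonexpansive, maps 𝒫₁ into 𝒫₁,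
and does not increase local height. -/
def Adequate (f : InfProof → InfProof) : Prop :=
  Nonexpansive f ∧ (∀ π : InfProof, MemP 1 π.lab → MemP 1 (f π).lab) ∧
    ∀ π : InfProof, height (f π).lab ≤ height π.lab

/-- The set 𝒫₁ of ∞-proofs whose main fragment is cut-free, as a subtype. -/
abbrev P1 : Type := {π : InfProof // MemP 1 π.lab}

/-- An A-reducing mapping: a nonexpansive map ℛ : 𝒫₁ × 𝒫₁ → 𝒫₁ such that
ℛ(π′,π″) proves Γ ⇒ Δ whenever π′ proves Γ ⇒ Δ, A and π″ proves A, Γ ⇒ Δ. -/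
def Reducing (A : Formula) (R : P1 → P1 → P1) : Prop :=
  (∀ (n : ℕ) (p₁ p₂ q₁ q₂ : P1), Sim n p₁.1.lab q₁.1.lab → Sim n p₂.1.lab q₂.1.lab →
      Sim n (R p₁ p₂).1.lab (R q₁ q₂).1.lab) ∧
  ∀ (p₁ p₂ : P1) (Γ Δ : Multiset Formula),
    Proves p₁.1 (Γ, A ::ₘ Δ) → Proves p₂.1 (A ::ₘ Γ, Δ) → Proves (R p₁ p₂).1 (Γ, Δ)

/-- A mapping is root-preserving if it maps ∞-proofs to ∞-proofs of the same sequent. -/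
def RootPres (f : InfProof → InfProof) : Prop :=
  ∀ (π : InfProof) (S : Sequent), Proves π S → Proves (f π) S

/-- The uniform distance on mappings of ∞-proofs. -/
noncomputable def udist (U V : InfProof → InfProof) : ℝ :=
  ⨆ π : InfProof, pdist (U π) (V π)

/- The immediate subproof of `π` at child `i` (junk value `π` if there is none). -/
open Classical in
noncomputable def subtree (π : InfProof) (i : Bool) : InfProof :=
  if h : ∃ τ : InfProof, τ.lab = shift i π.lab then h.choose else π

/-- `IsFOp E F` : `F` is the operator ℱ (relative to the one-step cut-elimination map
`E` = ℰ*) defined by: on proofs with cut-free main fragment it commutes with the last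
rule, applying `U` at right premises of (□) and fixing single-node proofs; on other
proofs it first applies `E`. -/
def IsFOp (E : InfProof → InfProof) (F : (InfProof → InfProof) → InfProof → InfProof) : Prop :=
  ∀ (U : InfProof → InfProof) (π : InfProof),
    (MemP 1 π.lab → height π.lab = 0 → F U π = π) ∧
    (∀ (r : Rule) (s : Sequent), MemP 1 π.lab → π.lab [] = some (r, s) →
        r ≠ Rule.box → r ≠ Rule.cut → height π.lab ≠ 0 →
        (F U π).lab [] = some (r, s) ∧
        shift false (F U π).lab = (F U (subtree π false)).lab ∧
        (r = Rule.impL → shift true (F U π).lab = (F U (subtree π true)).lab)) ∧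
    (∀ s : Sequent, MemP 1 π.lab → π.lab [] = some (Rule.box, s) →
        (F U π).lab [] = some (Rule.box, s) ∧
        shift false (F U π).lab = (F U (subtree π false)).lab ∧
        shift true (F U π).lab = (U (subtree π true)).lab) ∧
    (¬ MemP 1 π.lab → F U π = F U (E π))

/-- Membership in 𝒩ₙ : a root-preserving nonexpansive map whose image lies in 𝒫ₙ. -/
def InN (n : ℕ) (U : InfProof → InfProof) : Prop :=
  Nonexpansive U ∧ RootPres U ∧ ∀ π : InfProof, MemP n (U π).lab

/-- The finitary sequent calculus Grz_Seq (with cut allowed iff the flag is `true`). -/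
inductive GrzSeq : Bool → Sequent → Prop
  | ax (c : Bool) (Γ Δ : Multiset Formula) (A : Formula) :
      GrzSeq c (A ::ₘ Γ, A ::ₘ Δ)
  | bot (c : Bool) (Γ Δ : Multiset Formula) :
      GrzSeq c (Formula.bot ::ₘ Γ, Δ)
  | impL (c : Bool) (Γ Δ : Multiset Formula) (A B : Formula) :
      GrzSeq c (B ::ₘ Γ, Δ) → GrzSeq c (Γ, A ::ₘ Δ) →
      GrzSeq c (Formula.imp A B ::ₘ Γ, Δ)
  | impR (c : Bool) (Γ Δ : Multiset Formula) (A B : Formula) :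
      GrzSeq c (A ::ₘ Γ, B ::ₘ Δ) → GrzSeq c (Γ, Formula.imp A B ::ₘ Δ)
  | refl (c : Bool) (Γ Δ : Multiset Formula) (B : Formula) :
      GrzSeq c (B ::ₘ Formula.box B ::ₘ Γ, Δ) → GrzSeq c (Formula.box B ::ₘ Γ, Δ)
  | grz (c : Bool) (Γ Δ : Multiset Formula) (A : Formula) (P : Multiset Formula) :
      GrzSeq c (Formula.box (Formula.imp A (Formula.box A)) ::ₘ boxed P, {A}) →
      GrzSeq c (Γ + boxed P, Formula.box A ::ₘ Δ)
  | cut (Γ Δ : Multiset Formula) (A : Formula) :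
      GrzSeq true (Γ, A ::ₘ Δ) → GrzSeq true (A ::ₘ Γ, Δ) → GrzSeq true (Γ, Δ)


namespace Inv
open Classical

/-- Validity of a labelling (the three closure conditions of `InfProof`). -/
structure ValidLab (l : Lab) : Prop where
  nojunk : ∀ (a : List Bool) (i : Bool), l a = none → l (a ++ [i]) = none
  step : ∀ (a : List Bool) (r : Rule) (s : Sequent), l a = some (r, s) →
      Inst r s ((l (a ++ [false])).map Prod.snd) ((l (a ++ [true])).map Prod.snd)
  branch : ∀ f : ℕ → Bool, (∀ n : ℕ, (l ((List.range n).map f)).isSome) →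
      ∀ N : ℕ, ∃ n : ℕ, N ≤ n ∧ f n = true ∧
        (l ((List.range n).map f)).map Prod.fst = some Rule.box

def pre (f : ℕ → Bool) (n : ℕ) : List Bool := (List.range n).map f

lemma pre_zero (f : ℕ → Bool) : pre f 0 = [] := rfl

lemma pre_succ (f : ℕ → Bool) (n : ℕ) : pre f (n+1) = pre f n ++ [f n] := by
  simp [pre, List.range_succ]

lemma validLab_of (π : InfProof) : ValidLab π.lab := ⟨π.nojunk, π.step, π.branch⟩

lemma some_up {l : Lab} (hn : ∀ (a : List Bool) (i : Bool), l a = none → l (a ++ [i]) = none)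
    (b : List Bool) : ∀ t : List Bool, (l (b ++ t)).isSome → (l b).isSome := by
  intro t
  induction t using List.reverseRecOn with
  | nil => simp
  | append_singleton t i ih =>
    intro h
    apply ih
    by_contra hc
    rw [Option.not_isSome_iff_eq_none] at hc
    have := hn (b ++ t) i hc
    rw [← List.append_assoc] at h
    rw [this] at h
    simp at h

lemma validLab_shift {l : Lab} (hv : ValidLab l) (i : Bool) : ValidLab (shift i l) := by
  constructor
  · intro a j h
    have : (i :: a) ++ [j] = i :: (a ++ [j]) := rfl
    exact (by simpa [shift, this] using hv.nojunk (i :: a) j (by simpa [shift] using h))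
  · intro a r s h
    have h1 : (i :: a) ++ [false] = i :: (a ++ [false]) := rfl
    have h2 : (i :: a) ++ [true] = i :: (a ++ [true]) := rfl
    have := hv.step (i :: a) r s (by simpa [shift] using h)
    rw [h1, h2] at this
    simpa [shift] using this
  · intro f hf N
    set f' : ℕ → Bool := fun k => if k = 0 then i else f (k-1) with hf'
    have hpre : ∀ n, pre f' (n+1) = i :: pre f n := by
      intro n
      induction n with
      | zero => simp [pre_succ, pre_zero, hf']
      | succ n ih =>
        rw [pre_succ, ih, pre_succ]
        simp [hf']
    have hsome : ∀ n, (l (pre f' n)).isSome := by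
      intro n
      match n with
      | 0 =>
        have := hf 0
        simp only [shift] at this
        exact some_up hv.nojunk [] [i] (by simpa using this)
      | Nat.succ m =>
        rw [hpre m]
        exact hf m
    obtain ⟨n, hn1, hn2, hn3⟩ := hv.branch f' hsome (N+1)
    match n, hn1 with
    | Nat.succ m, hn1 =>
      refine ⟨m, by omega, ?_, ?_⟩
      · simpa [hf'] using hn2
      · rw [show ((List.range (m+1)).map f') = pre f' (m+1) from rfl, hpre m] at hn3
        simpa [shift, pre] using hn3



variable (ρ : Sequent → Sequent) (R₀ : Option Rule) (g : Bool)

/-- The graft condition at the root. -/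
def Gr (l : Lab) : Prop :=
  ∃ r s, l [] = some (r, s) ∧ some r = R₀ ∧ (l [g]).map Prod.snd = some (ρ s)

open Classical in
/-- The generic relabelling-with-grafting transformation. -/
noncomputable def tr : Lab → List Bool → Option (Rule × Sequent)
  | l, [] => if Gr ρ R₀ g l then l [g] else (l []).map (fun p => (p.1, ρ p.2))
  | l, i :: a =>
    if Gr ρ R₀ g l then l (g :: i :: a)
    else if (l []).map Prod.fst = some Rule.box ∧ i = true then l (i :: a)
    else tr (shift i l) a

variable {ρ R₀ g}

lemma tr_graft {l : Lab} (h : Gr ρ R₀ g l) : ∀ a, tr ρ R₀ g l a = l (g :: a) := by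
  intro a
  cases a with
  | nil => rw [tr, if_pos h]
  | cons i a => rw [tr, if_pos h]

lemma tr_nil {l : Lab} (h : ¬ Gr ρ R₀ g l) :
    tr ρ R₀ g l [] = (l []).map (fun p => (p.1, ρ p.2)) := by
  rw [tr, if_neg h]

lemma tr_stop {l : Lab} (h : ¬ Gr ρ R₀ g l) (hb : (l []).map Prod.fst = some Rule.box) :
    ∀ a, tr ρ R₀ g l (true :: a) = l (true :: a) := by
  intro a
  rw [tr, if_neg h, if_pos ⟨hb, rfl⟩]

lemma tr_go {l : Lab} (h : ¬ Gr ρ R₀ g l) {i : Bool}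
    (hs : ¬ ((l []).map Prod.fst = some Rule.box ∧ i = true)) :
    ∀ a, tr ρ R₀ g l (i :: a) = tr ρ R₀ g (shift i l) a := by
  intro a
  rw [tr, if_neg h, if_neg hs]

lemma tr_nil_snd (l : Lab) :
    (tr ρ R₀ g l []).map Prod.snd = ((l []).map Prod.snd).map ρ := by
  by_cases h : Gr ρ R₀ g l
  · obtain ⟨r, s, h1, h2, h3⟩ := h
    rw [tr_graft ⟨r, s, h1, h2, h3⟩ [], h1]
    exact h3.trans (by simp)
  · rw [tr_nil h]
    cases l [] <;> simp

lemma tr_nil_fst {l : Lab} (h : ¬ Gr ρ R₀ g l) :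
    (tr ρ R₀ g l []).map Prod.fst = (l []).map Prod.fst := by
  rw [tr_nil h]; cases l [] <;> simp

lemma tr_nil_isSome {l : Lab} (h : (l []).isSome) : (tr ρ R₀ g l []).isSome := by
  by_cases hg : Gr ρ R₀ g l
  · obtain ⟨r, s, h1, h2, h3⟩ := hg
    rw [tr_graft ⟨r, s, h1, h2, h3⟩ []]
    cases hl : l [g] <;> simp [hl] at h3 ⊢
  · rw [tr_nil hg]; cases hl : l [] <;> simp [hl] at h ⊢

/-- `pg` picks the premise used for grafting. -/
def pg (p₁ p₂ : Option Sequent) : Option Sequent := if g then p₂ else p₁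

/-- Compatibility of the sequent transformation `ρ` with the rules (away from grafts). -/
def Compat (Φ : Sequent → Prop) : Prop :=
  ∀ (r : Rule) (s : Sequent) (p₁ p₂ : Option Sequent), Inst r s p₁ p₂ → Φ s →
    ¬ (some r = R₀ ∧ pg (g := g) p₁ p₂ = some (ρ s)) →
    Inst r (ρ s) (p₁.map ρ) (if r = Rule.box then p₂ else p₂.map ρ) ∧
    (∀ t, p₁ = some t → Φ t) ∧ (∀ t, p₂ = some t → r ≠ Rule.box → Φ t)

section main
variable {Φ : Sequent → Prop}

lemma not_gr_of {l : Lab} {r : Rule} {s : Sequent} (hl : l [] = some (r, s))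
    (h : ¬ Gr ρ R₀ g l) : ¬ (some r = R₀ ∧ (l [g]).map Prod.snd = some (ρ s)) := by
  intro ⟨h1, h2⟩
  exact h ⟨r, s, hl, h1, h2⟩

lemma pg_eq (l : Lab) :
    pg (g := g) ((l ([] ++ [false])).map Prod.snd) ((l ([] ++ [true])).map Prod.snd)
      = (l [g]).map Prod.snd := by
  cases g <;> rfl

lemma tr_nojunk : ∀ (a : List Bool) (l : Lab),
    (∀ (b : List Bool) (i : Bool), l b = none → l (b ++ [i]) = none) →
    tr ρ R₀ g l a = none → ∀ i, tr ρ R₀ g l (a ++ [i]) = none := by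
  intro a
  induction a with
  | nil =>
    intro l hn h i
    by_cases hg : Gr ρ R₀ g l
    · obtain ⟨r, s, h1, h2, h3⟩ := hg
      rw [tr_graft ⟨r, s, h1, h2, h3⟩ []] at h
      rw [h] at h3; simp at h3
    · rw [tr_nil hg] at h
      have hl : l [] = none := by cases hl : l [] <;> simp [hl] at h ⊢
      have hi : l [i] = none := hn [] i hl
      have : ([] : List Bool) ++ [i] = i :: [] := rfl
      rw [this, tr_go hg (by simp [hl])]
      have hgi : ¬ Gr ρ R₀ g (shift i l) := by
        intro ⟨r, s, h1, _, _⟩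
        rw [shift, hi] at h1; exact absurd h1 (by simp)
      rw [tr_nil hgi]
      simp [shift, hi]
  | cons j a ih =>
    intro l hn h i
    by_cases hg : Gr ρ R₀ g l
    · rw [tr_graft hg] at h ⊢
      have : g :: ((j :: a) ++ [i]) = (g :: j :: a) ++ [i] := rfl
      rw [this]
      exact hn _ i h
    · by_cases hs : (l []).map Prod.fst = some Rule.box ∧ j = true
      · obtain ⟨hb, rfl⟩ := hs
        rw [tr_stop hg hb] at h
        have : (true :: a) ++ [i] = true :: (a ++ [i]) := rfl
        rw [this, tr_stop hg hb]
        exact hn (true :: a) i h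
      · rw [tr_go hg hs] at h
        have : (j :: a) ++ [i] = j :: (a ++ [i]) := rfl
        rw [this, tr_go hg hs]
        refine ih (shift j l) ?_ h i
        intro b k hb
        have hjb : (j :: b) ++ [k] = j :: (b ++ [k]) := rfl
        simpa [shift, hjb] using hn (j :: b) k (by simpa [shift] using hb)

lemma phi_shift (hc : Compat (ρ := ρ) (R₀ := R₀) (g := g) Φ) {l : Lab} (hv : ValidLab l) (hΦ : ∀ r s, l [] = some (r, s) → Φ s)
    (hg : ¬ Gr ρ R₀ g l) {i : Bool}
    (hs : ¬ ((l []).map Prod.fst = some Rule.box ∧ i = true)) :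
    ∀ r s, (shift i l) [] = some (r, s) → Φ s := by
  intro r s h
  simp only [shift] at h
  cases hl : l [] with
  | none =>
    have := hv.nojunk [] i hl
    rw [show ([] : List Bool) ++ [i] = [i] from rfl] at this
    rw [show (i :: ([] : List Bool)) = [i] from rfl] at h
    rw [this] at h; exact absurd h (by simp)
  | some p =>
    obtain ⟨r₀, s₀⟩ := p
    have hinst := hv.step [] r₀ s₀ hl
    have hΦ₀ := hΦ r₀ s₀ hl
    have hng := not_gr_of hl hg
    rw [← pg_eq l] at hng
    obtain ⟨_, h1, h2⟩ := hc r₀ s₀ _ _ hinst hΦ₀ hng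
    cases i with
    | false =>
      apply h1 s
      rw [show ([] : List Bool) ++ [false] = [false] from rfl,
        show (false :: ([] : List Bool)) = [false] from rfl] at *
      rw [h]; rfl
    | true =>
      have hr₀ : r₀ ≠ Rule.box := by
        intro hb; exact hs ⟨by rw [hl, hb]; rfl, rfl⟩
      apply h2 s _ hr₀
      rw [show ([] : List Bool) ++ [true] = [true] from rfl,
        show (true :: ([] : List Bool)) = [true] from rfl] at *
      rw [h]; rfl

lemma tr_step (hc : Compat (ρ := ρ) (R₀ := R₀) (g := g) Φ) : ∀ (a : List Bool) (l : Lab), ValidLab l →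
    (∀ r s, l [] = some (r, s) → Φ s) →
    ∀ (r : Rule) (s : Sequent), tr ρ R₀ g l a = some (r, s) →
    Inst r s ((tr ρ R₀ g l (a ++ [false])).map Prod.snd)
      ((tr ρ R₀ g l (a ++ [true])).map Prod.snd) := by
  intro a
  induction a with
  | nil =>
    intro l hv hΦ r s h
    by_cases hg : Gr ρ R₀ g l
    · rw [tr_graft hg] at h
      rw [show ([] : List Bool) ++ [false] = [false] from rfl,
        show ([] : List Bool) ++ [true] = [true] from rfl, tr_graft hg, tr_graft hg]
      have := hv.step [g] r s h
      rw [show [g] ++ [false] = g :: [false] from rfl,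
        show [g] ++ [true] = g :: [true] from rfl] at this
      exact this
    · rw [tr_nil hg] at h
      cases hl : l [] with
      | none => rw [hl] at h; exact absurd h (by simp)
      | some p =>
        obtain ⟨r₀, s₀⟩ := p
        rw [hl] at h
        simp only [Option.map_some] at h
        injection h with h'
        have hr : r₀ = r := congrArg Prod.fst h'
        have hseq : ρ s₀ = s := congrArg Prod.snd h'
        subst hr
        subst hseq
        have hinst := hv.step [] r₀ s₀ hl
        have hng := not_gr_of hl hg
        rw [← pg_eq l] at hng
        obtain ⟨hi, _, _⟩ := hc r₀ s₀ _ _ hinst (hΦ r₀ s₀ hl) hng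
        -- compute the children of the transformed tree
        have hfc : (tr ρ R₀ g l ([] ++ [false])).map Prod.snd
            = ((l ([] ++ [false])).map Prod.snd).map ρ := by
          rw [show ([] : List Bool) ++ [false] = false :: [] from rfl,
            tr_go hg (by simp), tr_nil_snd]
          rfl
        rw [hfc]
        by_cases hbox : r₀ = Rule.box
        · rw [show ([] : List Bool) ++ [true] = true :: [] from rfl,
            tr_stop hg (by rw [hl, hbox]; rfl)]
          rw [if_pos hbox] at hi
          exact hi
        · have htc : (tr ρ R₀ g l ([] ++ [true])).map Prod.snd
              = ((l ([] ++ [true])).map Prod.snd).map ρ := by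
            rw [show ([] : List Bool) ++ [true] = true :: [] from rfl,
              tr_go hg (by rw [hl]; simp; intro hb; exact absurd hb hbox), tr_nil_snd]
            rfl
          rw [htc]
          rw [if_neg hbox] at hi
          simpa [Option.map_map] using hi
  | cons j a ih =>
    intro l hv hΦ r s h
    by_cases hg : Gr ρ R₀ g l
    · rw [tr_graft hg] at h
      rw [show (j :: a) ++ [false] = j :: (a ++ [false]) from rfl,
        show (j :: a) ++ [true] = j :: (a ++ [true]) from rfl, tr_graft hg, tr_graft hg]
      have := hv.step (g :: j :: a) r s h
      rw [show (g :: j :: a) ++ [false] = g :: (j :: (a ++ [false])) from rfl,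
        show (g :: j :: a) ++ [true] = g :: (j :: (a ++ [true])) from rfl] at this
      exact this
    · by_cases hs : (l []).map Prod.fst = some Rule.box ∧ j = true
      · obtain ⟨hb, rfl⟩ := hs
        rw [tr_stop hg hb] at h
        rw [show (true :: a) ++ [false] = true :: (a ++ [false]) from rfl,
          show (true :: a) ++ [true] = true :: (a ++ [true]) from rfl,
          tr_stop hg hb, tr_stop hg hb]
        have := hv.step (true :: a) r s h
        rw [show (true :: a) ++ [false] = true :: (a ++ [false]) from rfl,
          show (true :: a) ++ [true] = true :: (a ++ [true]) from rfl] at this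
        exact this
      · rw [tr_go hg hs] at h
        rw [show (j :: a) ++ [false] = j :: (a ++ [false]) from rfl,
          show (j :: a) ++ [true] = j :: (a ++ [true]) from rfl,
          tr_go hg hs, tr_go hg hs]
        exact ih (shift j l) (validLab_shift hv j) (phi_shift hc hv hΦ hg hs) r s h

def shiftA (b : List Bool) (l : Lab) : Lab := fun x => l (b ++ x)

lemma shiftA_nil (l : Lab) : shiftA [] l = l := rfl

lemma shiftA_snoc (b : List Bool) (i : Bool) (l : Lab) :
    shiftA (b ++ [i]) l = shift i (shiftA b l) := by
  funext x
  simp only [shiftA, shift]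
  rw [List.append_assoc]
  rfl

lemma tr_branch {l : Lab} (hv : ValidLab l) :
    ∀ f : ℕ → Bool, (∀ n : ℕ, (tr ρ R₀ g l (pre f n)).isSome) →
    ∀ N : ℕ, ∃ n : ℕ, N ≤ n ∧ f n = true ∧
      (tr ρ R₀ g l (pre f n)).map Prod.fst = some Rule.box := by
  intro f hf N
  by_cases hid : ∃ (n₀ : ℕ) (b₀ : List Bool), ∀ x, tr ρ R₀ g l (pre f n₀ ++ x) = l (b₀ ++ x)
  · obtain ⟨n₀, b₀, hb⟩ := hid
    set L := b₀.length with hL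
    have hseg : ∀ j, pre f (n₀ + j) = pre f n₀ ++ (List.range j).map (fun t => f (n₀ + t)) := by
      intro j
      induction j with
      | zero => simp [pre]
      | succ j ih =>
        rw [show n₀ + (j+1) = (n₀ + j) + 1 by omega, pre_succ, ih]
        rw [List.range_succ]
        simp
    set f' : ℕ → Bool := fun k => if k < L then b₀.getD k false else f (k - L + n₀) with hf'
    have htake : ∀ k, k ≤ L → pre f' k = b₀.take k := by
      intro k
      induction k with
      | zero => intro _; simp [pre]
      | succ k ih =>
        intro hk
        have hkL : k < b₀.length := by omega
        rw [pre_succ, ih (by omega)]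
        have hfk : f' k = b₀[k] := by
          simp only [hf']
          rw [if_pos (show k < L by omega)]
          exact List.getD_eq_getElem b₀ false hkL
        rw [hfk]
        simpa [List.concat_eq_append] using List.take_concat_get b₀ k hkL
    have hpre' : ∀ j, pre f' (L + j) = b₀ ++ (List.range j).map (fun t => f (n₀ + t)) := by
      intro j
      induction j with
      | zero => rw [Nat.add_zero, htake L le_rfl, List.take_length]; simp
      | succ j ih =>
        rw [show L + (j+1) = (L + j) + 1 by omega, pre_succ, ih, List.range_succ]
        have : f' (L + j) = f (n₀ + j) := by
          simp only [hf', if_neg (show ¬ (L + j < L) by omega)]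
          congr 1
          omega
        rw [this]
        simp
    have hbsome : (l b₀).isSome := by
      have := hb []
      rw [List.append_nil, List.append_nil] at this
      rw [← this]
      exact hf n₀
    have hsome' : ∀ k, (l (pre f' k)).isSome := by
      intro k
      rcases le_or_gt k L with hk | hk
      · rw [htake k hk]
        have := some_up hv.nojunk (b₀.take k) (b₀.drop k)
        rw [List.take_append_drop] at this
        exact this hbsome
      · have hkj : k = L + (k - L) := by omega
        rw [hkj, hpre', ← hb, ← hseg]
        exact hf (n₀ + (k - L))
    obtain ⟨k, hk1, hk2, hk3⟩ := hv.branch f' hsome' (L + N)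
    have hkj : k = L + (k - L) := by omega
    refine ⟨n₀ + (k - L), by omega, ?_, ?_⟩
    · rw [← hk2, hf']
      simp only [if_neg (show ¬ (k < L) by omega)]
      congr 1
      omega
    · rw [hseg, hb, ← hpre', ← hkj]
      exact hk3
  · exfalso
    have T : ∀ n x, tr ρ R₀ g l (pre f n ++ x) = tr ρ R₀ g (shiftA (pre f n) l) x := by
      intro n
      induction n with
      | zero => intro x; rw [pre_zero]; rfl
      | succ n ihn =>
        have hng : ¬ Gr ρ R₀ g (shiftA (pre f n) l) := by
          intro hG
          apply hid
          refine ⟨n, pre f n ++ [g], fun x => ?_⟩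
          rw [ihn x, tr_graft hG x]
          simp only [shiftA]
          rw [List.append_assoc]
          rfl
        intro x
        have hns : ¬ (((shiftA (pre f n) l) []).map Prod.fst = some Rule.box ∧ f n = true) := by
          intro hS
          apply hid
          refine ⟨n + 1, pre f (n+1), fun x => ?_⟩
          have e1 : pre f (n+1) ++ x = pre f n ++ (f n :: x) := by
            rw [pre_succ, List.append_assoc]; rfl
          rw [e1, ihn (f n :: x), hS.2, tr_stop hng hS.1 x]
          rfl
        have e1 : pre f (n+1) ++ x = pre f n ++ (f n :: x) := by
          rw [pre_succ, List.append_assoc]; rfl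
        rw [e1, ihn (f n :: x), tr_go hng hns x, pre_succ, shiftA_snoc]
    have hng : ∀ n, ¬ Gr ρ R₀ g (shiftA (pre f n) l) := by
      intro n hG
      apply hid
      refine ⟨n, pre f n ++ [g], fun x => ?_⟩
      rw [T n x, tr_graft hG x]
      simp only [shiftA]
      rw [List.append_assoc]
      rfl
    have hsm : ∀ n, (l (pre f n)).isSome := by
      intro n
      have h1 := hf n
      rw [show pre f n = pre f n ++ [] by rw [List.append_nil], T n []] at h1
      rw [tr_nil (hng n)] at h1
      have : ((shiftA (pre f n) l) []).isSome := by
        cases hx : (shiftA (pre f n) l) [] <;> simp [hx] at h1 ⊢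
      simpa [shiftA] using this
    obtain ⟨n, _, h2, h3⟩ := hv.branch f hsm 0
    apply hid
    refine ⟨n + 1, pre f (n+1), fun x => ?_⟩
    have hstop : ((shiftA (pre f n) l) []).map Prod.fst = some Rule.box := by
      simpa [shiftA] using (show (l (pre f n)).map Prod.fst = some Rule.box from h3)
    have e1 : pre f (n+1) ++ x = pre f n ++ (f n :: x) := by
      rw [pre_succ, List.append_assoc]; rfl
    rw [e1, T n (f n :: x), h2, tr_stop (hng n) hstop x]
    rfl

lemma inMain_prefix {l : Lab}
    (hn : ∀ (a : List Bool) (i : Bool), l a = none → l (a ++ [i]) = none)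
    {a b : List Bool} (h : InMain l a) (hp : b <+: a) : InMain l b := by
  obtain ⟨t, rfl⟩ := hp
  constructor
  · exact some_up hn b t h.1
  · intro u c hbc hu
    have : b ++ t = u ++ true :: (c ++ t) := by rw [hbc]; simp
    have := h.2 u (c ++ t) this hu
    exact (List.append_eq_nil_iff.mp this).1

lemma main_bdd {l : Lab} (hv : ValidLab l) :
    BddAbove {n : ℕ | ∃ a : List Bool, InMain l a ∧ a.length = n} := by
  by_contra hbd
  rw [not_bddAbove_iff] at hbd
  set P : List Bool → Prop := fun b => ∀ N, ∃ a, InMain l a ∧ b <+: a ∧ N ≤ a.length with hP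
  have hP0 : P [] := by
    intro N
    obtain ⟨y, ⟨a, ha, rfl⟩, hy⟩ := hbd N
    exact ⟨a, ha, List.nil_prefix, by omega⟩
  have hstep : ∀ b, P b → P (b ++ [false]) ∨ P (b ++ [true]) := by
    intro b hPb
    by_cases hf0 : P (b ++ [false])
    · exact Or.inl hf0
    by_cases hf1 : P (b ++ [true])
    · exact Or.inr hf1
    exfalso
    simp only [hP, not_forall, not_exists, not_and, not_le] at hf0 hf1
    obtain ⟨N₀, h0⟩ := hf0
    obtain ⟨N₁, h1⟩ := hf1
    obtain ⟨a, ha1, ⟨t, rfl⟩, ha3⟩ := hPb (max (max N₀ N₁) (b.length + 1))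
    cases t with
    | nil => rw [List.append_nil] at ha3; omega
    | cons i t' =>
      have hpre : b ++ [i] <+: b ++ i :: t' := ⟨t', by simp⟩
      cases i
      · have := h0 _ ha1 hpre; omega
      · have := h1 _ ha1 hpre; omega
  let q : ℕ → List Bool := fun n =>
    Nat.rec [] (fun _ b => b ++ [if P (b ++ [false]) then false else true]) n
  have hq_succ : ∀ n, q (n+1) = q n ++ [if P (q n ++ [false]) then false else true] :=
    fun n => rfl
  have hqP : ∀ n, P (q n) := by
    intro n
    induction n with
    | zero => exact hP0
    | succ n ih =>
      rw [hq_succ]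
      by_cases hd : P (q n ++ [false])
      · rw [if_pos hd]; exact hd
      · rw [if_neg hd]
        rcases hstep (q n) ih with h | h
        · exact absurd h hd
        · exact h
  set f : ℕ → Bool := fun n => if P (q n ++ [false]) then false else true with hf
  have hpref : ∀ n, pre f n = q n := by
    intro n
    induction n with
    | zero => rfl
    | succ n ih => rw [pre_succ, ih, hq_succ]
  have hqM : ∀ n, InMain l (q n) := by
    intro n
    obtain ⟨a, ha, hp, _⟩ := hqP n 0
    exact inMain_prefix hv.nojunk ha hp
  obtain ⟨n, _, h2, h3⟩ := hv.branch f (fun n => by rw [show (List.range n).map f = pre f n from rfl, hpref]; exact (hqM n).1) 0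
  have hfn1 : q (n+1) = q n ++ [true] := by
    rw [hq_succ n, show (if P (q n ++ [false]) then false else true) = f n from rfl, h2]
  have hdec : q (n+2) = q n ++ true :: [f (n+1)] := by
    rw [show n+2 = (n+1)+1 from rfl, hq_succ (n+1),
      show (if P (q (n+1) ++ [false]) then false else true) = f (n+1) from rfl, hfn1]
    simp
  have := (hqM (n+2)).2 (q n) [f (n+1)] hdec (by rw [← hpref n]; exact h3)
  exact absurd this (by simp)

lemma tr_inMain (hgb : g = true → R₀ ≠ some Rule.box) :
    ∀ (a : List Bool) (l : Lab), InMain (tr ρ R₀ g l) a →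
    ∃ a', InMain l a' ∧ a.length ≤ a'.length := by
  intro a
  induction a with
  | nil =>
    intro l h
    by_cases hG : Gr ρ R₀ g l
    · refine ⟨[g], ⟨?_, ?_⟩, by simp⟩
      · rw [← tr_graft hG []]; exact h.1
      · intro u c huc hfst
        cases u with
        | nil =>
          simp only [List.nil_append] at huc
          injection huc with h1 h2
          exact h2.symm
        | cons b u' =>
          simp only [List.cons_append] at huc
          injection huc with h1 h2
          exact absurd h2.symm (by simp)
    · refine ⟨[], ⟨?_, ?_⟩, by simp⟩
      · have := h.1
        rw [tr_nil hG] at this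
        cases hl : l [] <;> simp [hl] at this ⊢
      · intro u c huc _
        exact absurd huc (by simp)
  | cons i a ih =>
    intro l h
    by_cases hG : Gr ρ R₀ g l
    · obtain ⟨r, s, hl, hR, hsnd⟩ := hG
      have hG' : Gr ρ R₀ g l := ⟨r, s, hl, hR, hsnd⟩
      refine ⟨g :: i :: a, ⟨?_, ?_⟩, by simp⟩
      · rw [← tr_graft hG' (i :: a)]
        exact h.1
      · intro u c huc hfst
        cases u with
        | nil =>
          exfalso
          simp only [List.nil_append] at huc
          injection huc with h1 h2
          rw [hl] at hfst
          simp only [Option.map_some] at hfst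
          apply hgb h1
          rw [← hR]
          rw [hfst]
        | cons b u' =>
          simp only [List.cons_append] at huc
          injection huc with h1 h2
          subst h1
          apply h.2 u' c h2
          rw [tr_graft hG' u']
          exact hfst
    · by_cases hstop : (l []).map Prod.fst = some Rule.box ∧ i = true
      · obtain ⟨hb, rfl⟩ := hstop
        refine ⟨true :: a, ⟨?_, ?_⟩, le_rfl⟩
        · rw [← tr_stop hG hb a]; exact h.1
        · intro u c huc hfst
          cases u with
          | nil =>
            simp only [List.nil_append] at huc
            injection huc with h1 h2
            subst h2
            exact h.2 [] a rfl (by rw [tr_nil_fst hG]; exact hb)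
          | cons b u' =>
            simp only [List.cons_append] at huc
            injection huc with h1 h2
            subst h1
            apply h.2 (true :: u') c (by rw [h2]; rfl)
            rw [tr_stop hG hb u']
            exact hfst
      · have hM : InMain (tr ρ R₀ g (shift i l)) a := by
          constructor
          · rw [← tr_go hG hstop a]; exact h.1
          · intro u c huc hfst
            apply h.2 (i :: u) c (by rw [huc]; rfl)
            rw [tr_go hG hstop u]
            exact hfst
        obtain ⟨a', hM', hlen⟩ := ih (shift i l) hM
        refine ⟨i :: a', ⟨hM'.1, ?_⟩, by simp only [List.length_cons]; omega⟩
        intro u c huc hfst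
        cases u with
        | nil =>
          exfalso
          simp only [List.nil_append] at huc
          injection huc with h1 h2
          exact hstop ⟨hfst, h1⟩
        | cons b u' =>
          simp only [List.cons_append] at huc
          injection huc with h1 h2
          subst h1
          exact hM'.2 u' c h2 hfst

lemma height_tr_le {l : Lab} (hv : ValidLab l) (hgb : g = true → R₀ ≠ some Rule.box) :
    height (tr ρ R₀ g l) ≤ height l := by
  have hbdd := main_bdd hv
  apply csSup_le'
  rintro n ⟨a, hM, rfl⟩
  obtain ⟨a', hM', hlen⟩ := tr_inMain hgb a l hM
  exact le_trans hlen (le_csSup hbdd ⟨a', hM', rfl⟩)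

lemma tr_graft_eq {l : Lab} (h : Gr ρ R₀ g l) : tr ρ R₀ g l = shift g l :=
  funext (fun a => tr_graft h a)

lemma tr_shift_comm {l : Lab} (hg : ¬ Gr ρ R₀ g l) {i : Bool}
    (hs : ¬ ((l []).map Prod.fst = some Rule.box ∧ i = true)) :
    shift i (tr ρ R₀ g l) = tr ρ R₀ g (shift i l) :=
  funext (fun a => tr_go hg hs a)

lemma tr_shift_stop {l : Lab} (hg : ¬ Gr ρ R₀ g l)
    (hb : (l []).map Prod.fst = some Rule.box) :
    shift true (tr ρ R₀ g l) = shift true l :=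
  funext (fun a => tr_stop hg hb a)

lemma gr_iff {l m : Lab} {r : Rule} {s : Sequent} (hl : l [] = some (r, s))
    (hm : m [] = some (r, s))
    (he : some r = R₀ → (l [g]).map Prod.snd = (m [g]).map Prod.snd) :
    Gr ρ R₀ g l ↔ Gr ρ R₀ g m := by
  constructor
  · rintro ⟨r', s', h1, h2, h3⟩
    rw [hl] at h1
    injection h1 with h1
    injection h1 with ha hb
    subst ha; subst hb
    exact ⟨r, s, hm, h2, by rw [← he h2]; exact h3⟩
  · rintro ⟨r', s', h1, h2, h3⟩
    rw [hm] at h1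
    injection h1 with h1
    injection h1 with ha hb
    subst ha; subst hb
    exact ⟨r, s, hl, h2, by rw [he h2]; exact h3⟩

lemma tr_child_snd {l : Lab} (hg : ¬ Gr ρ R₀ g l) {i : Bool}
    (hs : ¬ ((l []).map Prod.fst = some Rule.box ∧ i = true)) :
    (tr ρ R₀ g l [i]).map Prod.snd = ((l [i]).map Prod.snd).map ρ := by
  rw [show ([i] : List Bool) = i :: [] from rfl, tr_go hg hs [], tr_nil_snd]
  rfl

lemma sim_root {n : ℕ} {l m : Lab} (h : Sim n l m) (hn : n ≠ 0) : l [] = m [] := by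
  cases h with
  | zero => exact absurd rfl hn
  | leaf => rfl
  | bin n l m r s hr hl hm => rw [hl, hm]
  | un n l m r s hr hl hm => rw [hl, hm]
  | box n l m s hl hm => rw [hl, hm]

lemma tr_sim (hgb : g = true → R₀ ≠ some Rule.box)
    (hRg : (R₀ = some Rule.impR ∨ R₀ = some Rule.refl ∨ R₀ = some Rule.box) → g = false) :
    ∀ {n : ℕ} {l m : Lab}, Sim n l m → ValidLab l → ValidLab m →
      Sim n (tr ρ R₀ g l) (tr ρ R₀ g m) := by
  intro n l m h
  induction h with
  | zero l m => intro _ _; exact Sim.zero _ _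
  | leaf n l hh =>
    intro hvl _
    exact Sim.leaf n _ (Nat.le_zero.mp (hh ▸ height_tr_le hvl hgb))
  | bin n l m r s hr hl hm h0 h1 hsf hst ihf iht =>
    intro hvl hvm
    have hGr : Gr ρ R₀ g l ↔ Gr ρ R₀ g m := gr_iff hl hm (fun _ => by cases g; exact h0; exact h1)
    have hbox : r ≠ Rule.box := by rcases hr with rfl | rfl <;> simp
    by_cases hG : Gr ρ R₀ g l
    · rw [tr_graft_eq hG, tr_graft_eq (hGr.mp hG)]
      cases g
      · exact hsf
      · exact hst
    · have hGm : ¬ Gr ρ R₀ g m := fun hh => hG (hGr.mpr hh)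
      have hnbl : ¬ ((l []).map Prod.fst = some Rule.box ∧ false = true) := by simp
      have hnbl' : ¬ ((l []).map Prod.fst = some Rule.box ∧ true = true) := by
        rw [hl]; simp; intro hh; exact absurd hh hbox
      have hnbm : ¬ ((m []).map Prod.fst = some Rule.box ∧ false = true) := by simp
      have hnbm' : ¬ ((m []).map Prod.fst = some Rule.box ∧ true = true) := by
        rw [hm]; simp; intro hh; exact absurd hh hbox
      apply Sim.bin n _ _ r (ρ s) hr
      · rw [tr_nil hG, hl]; rfl
      · rw [tr_nil hGm, hm]; rfl
      · rw [tr_child_snd hG hnbl, tr_child_snd hGm hnbm, h0]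
      · rw [tr_child_snd hG hnbl', tr_child_snd hGm hnbm', h1]
      · rw [tr_shift_comm hG hnbl, tr_shift_comm hGm hnbm]
        exact ihf (validLab_shift hvl false) (validLab_shift hvm false)
      · rw [tr_shift_comm hG hnbl', tr_shift_comm hGm hnbm']
        exact iht (validLab_shift hvl true) (validLab_shift hvm true)
  | un n l m r s hr hl hm h0 hsf ihf =>
    intro hvl hvm
    have hgf : some r = R₀ → g = false := by
      intro hh
      apply hRg
      rcases hr with rfl | rfl
      · exact Or.inl hh.symm
      · exact Or.inr (Or.inl hh.symm)
    have hGr : Gr ρ R₀ g l ↔ Gr ρ R₀ g m := by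
      apply gr_iff hl hm
      intro hh
      rw [hgf hh]
      exact h0
    have hbox : r ≠ Rule.box := by rcases hr with rfl | rfl <;> simp
    by_cases hG : Gr ρ R₀ g l
    · have hg0 : g = false := by
        obtain ⟨r', s', h1', h2', _⟩ := hG
        rw [hl] at h1'
        injection h1' with h1'
        injection h1' with ha hb
        subst ha; subst hb
        exact hgf h2'
      rw [tr_graft_eq hG, tr_graft_eq (hGr.mp hG), hg0]
      exact hsf
    · have hGm : ¬ Gr ρ R₀ g m := fun hh => hG (hGr.mpr hh)
      have hnbl : ¬ ((l []).map Prod.fst = some Rule.box ∧ false = true) := by simp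
      have hnbm : ¬ ((m []).map Prod.fst = some Rule.box ∧ false = true) := by simp
      apply Sim.un n _ _ r (ρ s) hr
      · rw [tr_nil hG, hl]; rfl
      · rw [tr_nil hGm, hm]; rfl
      · rw [tr_child_snd hG hnbl, tr_child_snd hGm hnbm, h0]
      · rw [tr_shift_comm hG hnbl, tr_shift_comm hGm hnbm]
        exact ihf (validLab_shift hvl false) (validLab_shift hvm false)
  | box n l m s hl hm h0 h1 hsf hst ihf iht =>
    intro hvl hvm
    have hgf : some Rule.box = R₀ → g = false := fun hh => hRg (Or.inr (Or.inr hh.symm))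
    have hGr : Gr ρ R₀ g l ↔ Gr ρ R₀ g m := by
      apply gr_iff hl hm
      intro hh
      rw [hgf hh]
      exact h0
    by_cases hG : Gr ρ R₀ g l
    · have hg0 : g = false := by
        obtain ⟨r', s', h1', h2', _⟩ := hG
        rw [hl] at h1'
        injection h1' with h1'
        injection h1' with ha hb
        subst hb
        exact hgf (ha ▸ h2')
      rw [tr_graft_eq hG, tr_graft_eq (hGr.mp hG), hg0]
      exact hsf
    · have hGm : ¬ Gr ρ R₀ g m := fun hh => hG (hGr.mpr hh)
      have hnbl : ¬ ((l []).map Prod.fst = some Rule.box ∧ false = true) := by simp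
      have hnbm : ¬ ((m []).map Prod.fst = some Rule.box ∧ false = true) := by simp
      have hbl : (l []).map Prod.fst = some Rule.box := by rw [hl]; rfl
      have hbm : (m []).map Prod.fst = some Rule.box := by rw [hm]; rfl
      apply Sim.box n _ _ (ρ s)
      · rw [tr_nil hG, hl]; rfl
      · rw [tr_nil hGm, hm]; rfl
      · rw [tr_child_snd hG hnbl, tr_child_snd hGm hnbm, h0]
      · rw [show ([true] : List Bool) = true :: [] from rfl, tr_stop hG hbl, tr_stop hGm hbm]
        exact h1
      · rw [tr_shift_comm hG hnbl, tr_shift_comm hGm hnbm]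
        exact ihf (validLab_shift hvl false) (validLab_shift hvm false)
      · rw [tr_shift_stop hG hbl, tr_shift_stop hGm hbm]
        exact hst

lemma tr_memP (hgb : g = true → R₀ ≠ some Rule.box)
    (hRg : (R₀ = some Rule.impR ∨ R₀ = some Rule.refl ∨ R₀ = some Rule.box) → g = false) :
    ∀ {n : ℕ} {l : Lab}, MemP n l → ValidLab l → MemP n (tr ρ R₀ g l) := by
  intro n l h
  induction h with
  | zero l => intro _; exact MemP.zero _
  | leaf n l hh =>
    intro hvl
    exact MemP.leaf n _ (Nat.le_zero.mp (hh ▸ height_tr_le hvl hgb))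
  | bin n l s hl hf ht ihf iht =>
    intro hvl
    by_cases hG : Gr ρ R₀ g l
    · rw [tr_graft_eq hG]
      cases g
      · exact hf
      · exact ht
    · have hnbl : ¬ ((l []).map Prod.fst = some Rule.box ∧ false = true) := by simp
      have hnbl' : ¬ ((l []).map Prod.fst = some Rule.box ∧ true = true) := by
        rw [hl]; simp
      apply MemP.bin n _ (ρ s)
      · rw [tr_nil hG, hl]; rfl
      · rw [tr_shift_comm hG hnbl]; exact ihf (validLab_shift hvl false)
      · rw [tr_shift_comm hG hnbl']; exact iht (validLab_shift hvl true)
  | un n l r s hr hl hf ihf =>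
    intro hvl
    by_cases hG : Gr ρ R₀ g l
    · have hg0 : g = false := by
        obtain ⟨r', s', h1', h2', _⟩ := hG
        rw [hl] at h1'
        injection h1' with h1'
        injection h1' with ha hb
        subst ha; subst hb
        apply hRg
        rcases hr with rfl | rfl
        · exact Or.inl h2'.symm
        · exact Or.inr (Or.inl h2'.symm)
      rw [tr_graft_eq hG, hg0]
      exact hf
    · have hnbl : ¬ ((l []).map Prod.fst = some Rule.box ∧ false = true) := by simp
      apply MemP.un n _ r (ρ s) hr
      · rw [tr_nil hG, hl]; rfl
      · rw [tr_shift_comm hG hnbl]; exact ihf (validLab_shift hvl false)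
  | box n l s hl hf ht ihf iht =>
    intro hvl
    by_cases hG : Gr ρ R₀ g l
    · have hg0 : g = false := by
        obtain ⟨r', s', h1', h2', _⟩ := hG
        rw [hl] at h1'
        injection h1' with h1'
        injection h1' with ha hb
        subst hb
        exact hRg (Or.inr (Or.inr (ha ▸ h2').symm))
      rw [tr_graft_eq hG, hg0]
      exact hf
    · have hnbl : ¬ ((l []).map Prod.fst = some Rule.box ∧ false = true) := by simp
      have hbl : (l []).map Prod.fst = some Rule.box := by rw [hl]; rfl
      apply MemP.box n _ (ρ s)
      · rw [tr_nil hG, hl]; rfl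
      · rw [tr_shift_comm hG hnbl]; exact ihf (validLab_shift hvl false)
      · rw [tr_shift_stop hG hbl]; exact ht

lemma tr_proves {l : Lab} {r : Rule} {s : Sequent} (hl : l [] = some (r, s)) :
    ∃ r', tr ρ R₀ g l [] = some (r', ρ s) := by
  have h1 := tr_nil_snd (ρ := ρ) (R₀ := R₀) (g := g) l
  rw [hl] at h1
  have h2 := tr_nil_isSome (ρ := ρ) (R₀ := R₀) (g := g) (l := l) (by rw [hl]; rfl)
  cases ht : tr ρ R₀ g l [] with
  | none => rw [ht] at h2; exact absurd h2 (by simp)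
  | some p =>
    rw [ht] at h1
    obtain ⟨r', s'⟩ := p
    refine ⟨r', ?_⟩
    simp only [Option.map_some] at h1
    injection h1 with h1
    rw [h1]

open Classical in
noncomputable def invMap (Φ : Sequent → Prop)
    (hc : Compat (ρ := ρ) (R₀ := R₀) (g := g) Φ) (π : InfProof) : InfProof :=
  if h : ∃ r s, π.lab [] = some (r, s) ∧ Φ s then
    { lab := tr ρ R₀ g π.lab
      root_some := tr_nil_isSome (by
        obtain ⟨r, s, hrs, _⟩ := h
        rw [hrs]; rfl)
      nojunk := fun a i ha => tr_nojunk a π.lab π.nojunk ha i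
      step := fun a r s ha => tr_step hc a π.lab (validLab_of π)
        (by
          intro r' s' hrs'
          obtain ⟨r'', s'', hrs'', hS⟩ := h
          rw [hrs'] at hrs''
          injection hrs'' with hp
          injection hp with hp1 hp2
          rw [← hp2] at hS
          exact hS) r s ha
      branch := tr_branch (validLab_of π) }
  else π

lemma invMap_lab_pos {Φ : Sequent → Prop} {hc : Compat (ρ := ρ) (R₀ := R₀) (g := g) Φ}
    {π : InfProof} (h : ∃ r s, π.lab [] = some (r, s) ∧ Φ s) :
    (invMap Φ hc π).lab = tr ρ R₀ g π.lab := by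
  rw [invMap, dif_pos h]

lemma invMap_lab_neg {Φ : Sequent → Prop} {hc : Compat (ρ := ρ) (R₀ := R₀) (g := g) Φ}
    {π : InfProof} (h : ¬ ∃ r s, π.lab [] = some (r, s) ∧ Φ s) :
    invMap Φ hc π = π := by
  rw [invMap, dif_neg h]

lemma invMap_adequate {Φ : Sequent → Prop} (hc : Compat (ρ := ρ) (R₀ := R₀) (g := g) Φ)
    (hgb : g = true → R₀ ≠ some Rule.box)
    (hRg : (R₀ = some Rule.impR ∨ R₀ = some Rule.refl ∨ R₀ = some Rule.box) → g = false) :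
    Adequate (invMap Φ hc) := by
  refine ⟨?_, ?_, ?_⟩
  · intro n π τ hsim
    cases n with
    | zero => exact Sim.zero _ _
    | succ n =>
      have hroot : π.lab [] = τ.lab [] := sim_root hsim (by omega)
      by_cases h : ∃ r s, π.lab [] = some (r, s) ∧ Φ s
      · have h' : ∃ r s, τ.lab [] = some (r, s) ∧ Φ s := by rwa [hroot] at h
        rw [invMap_lab_pos h, invMap_lab_pos h']
        exact tr_sim hgb hRg hsim (validLab_of π) (validLab_of τ)
      · have h' : ¬ ∃ r s, τ.lab [] = some (r, s) ∧ Φ s := by rwa [hroot] at h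
        rw [invMap_lab_neg h, invMap_lab_neg h']
        exact hsim
  · intro π hm
    by_cases h : ∃ r s, π.lab [] = some (r, s) ∧ Φ s
    · rw [invMap_lab_pos h]
      exact tr_memP hgb hRg hm (validLab_of π)
    · rw [invMap_lab_neg h]
      exact hm
  · intro π
    by_cases h : ∃ r s, π.lab [] = some (r, s) ∧ Φ s
    · rw [invMap_lab_pos h]
      exact height_tr_le (validLab_of π) hgb
    · rw [invMap_lab_neg h]

lemma invMap_proves {Φ : Sequent → Prop} {hc : Compat (ρ := ρ) (R₀ := R₀) (g := g) Φ}
    {π : InfProof} {S : Sequent} (h : Proves π S) (hS : Φ S) :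
    Proves (invMap Φ hc π) (ρ S) := by
  obtain ⟨r, hr⟩ := h
  have hcond : ∃ r' s', π.lab [] = some (r', s') ∧ Φ s' := ⟨r, S, hr, hS⟩
  obtain ⟨r', hr'⟩ := tr_proves (ρ := ρ) (R₀ := R₀) (g := g) hr
  exact ⟨r', by rw [invMap_lab_pos hcond]; exact hr'⟩

/-! ### Multiset helpers -/

lemma erase_cons_of_mem {C x : Formula} {M : Multiset Formula} (h : C ∈ M) :
    (x ::ₘ M).erase C = x ::ₘ M.erase C := by
  by_cases hx : x = C
  · subst hx
    rw [Multiset.erase_cons_head]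
    exact (Multiset.cons_erase h).symm
  · exact Multiset.erase_cons_tail M hx

lemma mem_left_of_nonbox {C : Formula} {Γ : Multiset Formula} {P : Multiset Formula}
    (hnb : ∀ y, C ≠ Formula.box y) (h : C ∈ Γ + boxed P) : C ∈ Γ := by
  rcases Multiset.mem_add.mp h with h | h
  · exact h
  · exfalso
    obtain ⟨y, _, hy⟩ := Multiset.mem_map.mp h
    exact hnb y hy.symm

lemma compat1 (A B : Formula) :
    Compat (ρ := fun s => (B ::ₘ s.1.erase (Formula.imp A B), s.2)) (R₀ := some Rule.impL)
      (g := false) (fun s => Formula.imp A B ∈ s.1) := by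
  intro r s p₁ p₂ hinst hΦ hng
  cases hinst with
  | ax Γ Δ p =>
    have hCm : Formula.imp A B ∈ Γ := by
      rcases Multiset.mem_cons.mp hΦ with h | h
      · exact absurd h (by simp)
      · exact h
    refine ⟨?_, by simp, by simp⟩
    show Inst Rule.ax
      (B ::ₘ (Formula.atom p ::ₘ Γ).erase (Formula.imp A B), Formula.atom p ::ₘ Δ) none none
    rw [erase_cons_of_mem hCm, Multiset.cons_swap]
    exact Inst.ax _ _ p
  | axBot Γ Δ =>
    have hCm : Formula.imp A B ∈ Γ := by
      rcases Multiset.mem_cons.mp hΦ with h | h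
      · exact absurd h (by simp)
      · exact h
    refine ⟨?_, by simp, by simp⟩
    show Inst Rule.axBot
      (B ::ₘ (Formula.bot ::ₘ Γ).erase (Formula.imp A B), Δ) none none
    rw [erase_cons_of_mem hCm, Multiset.cons_swap]
    exact Inst.axBot _ _
  | impL Γ Δ A' B' =>
    have hne : Formula.imp A' B' ≠ Formula.imp A B := by
      intro he
      apply hng
      refine ⟨rfl, ?_⟩
      show some (B' ::ₘ Γ, Δ)
        = some (B ::ₘ (Formula.imp A' B' ::ₘ Γ).erase (Formula.imp A B), Δ)
      rw [he, Multiset.erase_cons_head]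
      injection he with h1 h2
      rw [h2]
    have hCm : Formula.imp A B ∈ Γ := by
      rcases Multiset.mem_cons.mp hΦ with h | h
      · exact absurd h.symm hne
      · exact h
    refine ⟨?_, ?_, ?_⟩
    · show Inst Rule.impL (B ::ₘ (Formula.imp A' B' ::ₘ Γ).erase (Formula.imp A B), Δ)
        (some (B ::ₘ (B' ::ₘ Γ).erase (Formula.imp A B), Δ))
        (some (B ::ₘ Γ.erase (Formula.imp A B), A' ::ₘ Δ))
      rw [erase_cons_of_mem hCm, Multiset.cons_swap, erase_cons_of_mem hCm,
        Multiset.cons_swap B B']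
      exact Inst.impL _ Δ A' B'
    · intro t ht
      injection ht with ht
      rw [← ht]
      exact Multiset.mem_cons_of_mem hCm
    · intro t ht _
      injection ht with ht
      rw [← ht]
      exact hCm
  | impR Γ Δ A' B' =>
    have hCm : Formula.imp A B ∈ Γ := hΦ
    refine ⟨?_, ?_, by simp⟩
    · show Inst Rule.impR (B ::ₘ Γ.erase (Formula.imp A B), Formula.imp A' B' ::ₘ Δ)
        (some (B ::ₘ (A' ::ₘ Γ).erase (Formula.imp A B), B' ::ₘ Δ)) none
      rw [erase_cons_of_mem hCm, Multiset.cons_swap B A']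
      exact Inst.impR _ Δ A' B'
    · intro t ht
      injection ht with ht
      rw [← ht]
      exact Multiset.mem_cons_of_mem hCm
  | refl Γ Δ A' =>
    have hCm : Formula.imp A B ∈ Γ := by
      rcases Multiset.mem_cons.mp hΦ with h | h
      · exact absurd h (by simp)
      · exact h
    refine ⟨?_, ?_, by simp⟩
    · show Inst Rule.refl (B ::ₘ (Formula.box A' ::ₘ Γ).erase (Formula.imp A B), Δ)
        (some (B ::ₘ (A' ::ₘ Formula.box A' ::ₘ Γ).erase (Formula.imp A B), Δ)) none
      rw [erase_cons_of_mem hCm, Multiset.cons_swap B (Formula.box A'),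
        erase_cons_of_mem (Multiset.mem_cons_of_mem hCm), erase_cons_of_mem hCm,
        Multiset.cons_swap B A', Multiset.cons_swap B (Formula.box A')]
      exact Inst.refl _ Δ A'
    · intro t ht
      injection ht with ht
      rw [← ht]
      exact Multiset.mem_cons_of_mem (Multiset.mem_cons_of_mem hCm)
  | box Γ Δ A' P =>
    have hCm : Formula.imp A B ∈ Γ := mem_left_of_nonbox (by simp) hΦ
    have herase : (Γ + boxed P).erase (Formula.imp A B)
        = Γ.erase (Formula.imp A B) + boxed P := Multiset.erase_add_left_pos _ hCm
    refine ⟨?_, ?_, ?_⟩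
    · show Inst Rule.box (B ::ₘ (Γ + boxed P).erase (Formula.imp A B), Formula.box A' ::ₘ Δ)
        (some (B ::ₘ (Γ + boxed P).erase (Formula.imp A B), A' ::ₘ Δ))
        (some (boxed P, {A'}))
      rw [herase, show B ::ₘ (Γ.erase (Formula.imp A B) + boxed P)
          = (B ::ₘ Γ.erase (Formula.imp A B)) + boxed P from (Multiset.cons_add _ _ _).symm]
      exact Inst.box _ Δ A' P
    · intro t ht
      injection ht with ht
      rw [← ht]
      exact hΦ
    · intro t _ hbox
      exact absurd rfl hbox
  | cut Γ Δ E =>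
    have hCm : Formula.imp A B ∈ Γ := hΦ
    refine ⟨?_, ?_, ?_⟩
    · show Inst Rule.cut (B ::ₘ Γ.erase (Formula.imp A B), Δ)
        (some (B ::ₘ Γ.erase (Formula.imp A B), E ::ₘ Δ))
        (some (B ::ₘ (E ::ₘ Γ).erase (Formula.imp A B), Δ))
      rw [erase_cons_of_mem hCm, Multiset.cons_swap B E]
      exact Inst.cut _ _ E
    · intro t ht
      injection ht with ht
      rw [← ht]
      exact hCm
    · intro t ht _
      injection ht with ht
      rw [← ht]
      exact Multiset.mem_cons_of_mem hCm

lemma compat2 (A B : Formula) :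
    Compat (ρ := fun s => (s.1.erase (Formula.imp A B), A ::ₘ s.2)) (R₀ := some Rule.impL)
      (g := true) (fun s => Formula.imp A B ∈ s.1) := by
  intro r s p₁ p₂ hinst hΦ hng
  cases hinst with
  | ax Γ Δ p =>
    have hCm : Formula.imp A B ∈ Γ := by
      rcases Multiset.mem_cons.mp hΦ with h | h
      · exact absurd h (by simp)
      · exact h
    refine ⟨?_, by simp, by simp⟩
    show Inst Rule.ax
      ((Formula.atom p ::ₘ Γ).erase (Formula.imp A B), A ::ₘ Formula.atom p ::ₘ Δ) none none
    rw [erase_cons_of_mem hCm, Multiset.cons_swap A (Formula.atom p) Δ]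
    exact Inst.ax _ _ p
  | axBot Γ Δ =>
    have hCm : Formula.imp A B ∈ Γ := by
      rcases Multiset.mem_cons.mp hΦ with h | h
      · exact absurd h (by simp)
      · exact h
    refine ⟨?_, by simp, by simp⟩
    show Inst Rule.axBot ((Formula.bot ::ₘ Γ).erase (Formula.imp A B), A ::ₘ Δ) none none
    rw [erase_cons_of_mem hCm]
    exact Inst.axBot _ _
  | impL Γ Δ A' B' =>
    have hne : Formula.imp A' B' ≠ Formula.imp A B := by
      intro he
      apply hng
      refine ⟨rfl, ?_⟩
      show some (Γ, A' ::ₘ Δ)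
        = some ((Formula.imp A' B' ::ₘ Γ).erase (Formula.imp A B), A ::ₘ Δ)
      rw [he, Multiset.erase_cons_head]
      injection he with h1 h2
      rw [h1]
    have hCm : Formula.imp A B ∈ Γ := by
      rcases Multiset.mem_cons.mp hΦ with h | h
      · exact absurd h.symm hne
      · exact h
    refine ⟨?_, ?_, ?_⟩
    · show Inst Rule.impL ((Formula.imp A' B' ::ₘ Γ).erase (Formula.imp A B), A ::ₘ Δ)
        (some ((B' ::ₘ Γ).erase (Formula.imp A B), A ::ₘ Δ))
        (some (Γ.erase (Formula.imp A B), A ::ₘ A' ::ₘ Δ))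
      rw [erase_cons_of_mem hCm, erase_cons_of_mem hCm, Multiset.cons_swap A A' Δ]
      exact Inst.impL _ _ A' B'
    · intro t ht
      injection ht with ht
      rw [← ht]
      exact Multiset.mem_cons_of_mem hCm
    · intro t ht _
      injection ht with ht
      rw [← ht]
      exact hCm
  | impR Γ Δ A' B' =>
    have hCm : Formula.imp A B ∈ Γ := hΦ
    refine ⟨?_, ?_, by simp⟩
    · show Inst Rule.impR (Γ.erase (Formula.imp A B), A ::ₘ Formula.imp A' B' ::ₘ Δ)
        (some ((A' ::ₘ Γ).erase (Formula.imp A B), A ::ₘ B' ::ₘ Δ)) none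
      rw [erase_cons_of_mem hCm, Multiset.cons_swap A (Formula.imp A' B') Δ,
        Multiset.cons_swap A B' Δ]
      exact Inst.impR _ _ A' B'
    · intro t ht
      injection ht with ht
      rw [← ht]
      exact Multiset.mem_cons_of_mem hCm
  | refl Γ Δ A' =>
    have hCm : Formula.imp A B ∈ Γ := by
      rcases Multiset.mem_cons.mp hΦ with h | h
      · exact absurd h (by simp)
      · exact h
    refine ⟨?_, ?_, by simp⟩
    · show Inst Rule.refl ((Formula.box A' ::ₘ Γ).erase (Formula.imp A B), A ::ₘ Δ)
        (some ((A' ::ₘ Formula.box A' ::ₘ Γ).erase (Formula.imp A B), A ::ₘ Δ)) none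
      rw [erase_cons_of_mem hCm, erase_cons_of_mem (Multiset.mem_cons_of_mem hCm),
        erase_cons_of_mem hCm]
      exact Inst.refl _ _ A'
    · intro t ht
      injection ht with ht
      rw [← ht]
      exact Multiset.mem_cons_of_mem (Multiset.mem_cons_of_mem hCm)
  | box Γ Δ A' P =>
    have hCm : Formula.imp A B ∈ Γ := mem_left_of_nonbox (by simp) hΦ
    have herase : (Γ + boxed P).erase (Formula.imp A B)
        = Γ.erase (Formula.imp A B) + boxed P := Multiset.erase_add_left_pos _ hCm
    refine ⟨?_, ?_, ?_⟩
    · show Inst Rule.box ((Γ + boxed P).erase (Formula.imp A B), A ::ₘ Formula.box A' ::ₘ Δ)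
        (some ((Γ + boxed P).erase (Formula.imp A B), A ::ₘ A' ::ₘ Δ))
        (some (boxed P, {A'}))
      rw [herase, Multiset.cons_swap A (Formula.box A') Δ, Multiset.cons_swap A A' Δ]
      exact Inst.box _ _ A' P
    · intro t ht
      injection ht with ht
      rw [← ht]
      exact hΦ
    · intro t _ hbox
      exact absurd rfl hbox
  | cut Γ Δ E =>
    have hCm : Formula.imp A B ∈ Γ := hΦ
    refine ⟨?_, ?_, ?_⟩
    · show Inst Rule.cut (Γ.erase (Formula.imp A B), A ::ₘ Δ)
        (some (Γ.erase (Formula.imp A B), A ::ₘ E ::ₘ Δ))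
        (some ((E ::ₘ Γ).erase (Formula.imp A B), A ::ₘ Δ))
      rw [erase_cons_of_mem hCm, Multiset.cons_swap A E Δ]
      exact Inst.cut _ _ E
    · intro t ht
      injection ht with ht
      rw [← ht]
      exact hCm
    · intro t ht _
      injection ht with ht
      rw [← ht]
      exact Multiset.mem_cons_of_mem hCm

lemma compat3 (A B : Formula) :
    Compat (ρ := fun s => (A ::ₘ s.1, B ::ₘ s.2.erase (Formula.imp A B)))
      (R₀ := some Rule.impR) (g := false) (fun s => Formula.imp A B ∈ s.2) := by
  intro r s p₁ p₂ hinst hΦ hng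
  cases hinst with
  | ax Γ Δ p =>
    have hCm : Formula.imp A B ∈ Δ := by
      rcases Multiset.mem_cons.mp hΦ with h | h
      · exact absurd h (by simp)
      · exact h
    refine ⟨?_, by simp, by simp⟩
    show Inst Rule.ax
      (A ::ₘ Formula.atom p ::ₘ Γ, B ::ₘ (Formula.atom p ::ₘ Δ).erase (Formula.imp A B))
      none none
    rw [erase_cons_of_mem hCm, Multiset.cons_swap A (Formula.atom p) Γ,
      Multiset.cons_swap B (Formula.atom p) (Δ.erase (Formula.imp A B))]
    exact Inst.ax _ _ p
  | axBot Γ Δ =>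
    refine ⟨?_, by simp, by simp⟩
    show Inst Rule.axBot
      (A ::ₘ Formula.bot ::ₘ Γ, B ::ₘ Δ.erase (Formula.imp A B)) none none
    rw [Multiset.cons_swap A Formula.bot Γ]
    exact Inst.axBot _ _
  | impL Γ Δ A' B' =>
    have hCm : Formula.imp A B ∈ Δ := hΦ
    refine ⟨?_, ?_, ?_⟩
    · show Inst Rule.impL
        (A ::ₘ Formula.imp A' B' ::ₘ Γ, B ::ₘ Δ.erase (Formula.imp A B))
        (some (A ::ₘ B' ::ₘ Γ, B ::ₘ Δ.erase (Formula.imp A B)))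
        (some (A ::ₘ Γ, B ::ₘ (A' ::ₘ Δ).erase (Formula.imp A B)))
      rw [erase_cons_of_mem hCm, Multiset.cons_swap A (Formula.imp A' B') Γ,
        Multiset.cons_swap A B' Γ, Multiset.cons_swap B A' (Δ.erase (Formula.imp A B))]
      exact Inst.impL _ _ A' B'
    · intro t ht
      injection ht with ht
      rw [← ht]
      exact hCm
    · intro t ht _
      injection ht with ht
      rw [← ht]
      exact Multiset.mem_cons_of_mem hCm
  | impR Γ Δ A' B' =>
    have hne : Formula.imp A' B' ≠ Formula.imp A B := by
      intro he
      apply hng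
      refine ⟨rfl, ?_⟩
      show some (A' ::ₘ Γ, B' ::ₘ Δ)
        = some (A ::ₘ Γ, B ::ₘ (Formula.imp A' B' ::ₘ Δ).erase (Formula.imp A B))
      rw [he, Multiset.erase_cons_head]
      injection he with h1 h2
      rw [h1, h2]
    have hCm : Formula.imp A B ∈ Δ := by
      rcases Multiset.mem_cons.mp hΦ with h | h
      · exact absurd h.symm hne
      · exact h
    refine ⟨?_, ?_, by simp⟩
    · show Inst Rule.impR
        (A ::ₘ Γ, B ::ₘ (Formula.imp A' B' ::ₘ Δ).erase (Formula.imp A B))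
        (some (A ::ₘ A' ::ₘ Γ, B ::ₘ (B' ::ₘ Δ).erase (Formula.imp A B))) none
      rw [erase_cons_of_mem hCm, erase_cons_of_mem hCm,
        Multiset.cons_swap B (Formula.imp A' B') (Δ.erase (Formula.imp A B)),
        Multiset.cons_swap A A' Γ, Multiset.cons_swap B B' (Δ.erase (Formula.imp A B))]
      exact Inst.impR _ _ A' B'
    · intro t ht
      injection ht with ht
      rw [← ht]
      exact Multiset.mem_cons_of_mem hCm
  | refl Γ Δ A' =>
    have hCm : Formula.imp A B ∈ Δ := hΦ
    refine ⟨?_, ?_, by simp⟩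
    · show Inst Rule.refl
        (A ::ₘ Formula.box A' ::ₘ Γ, B ::ₘ Δ.erase (Formula.imp A B))
        (some (A ::ₘ A' ::ₘ Formula.box A' ::ₘ Γ, B ::ₘ Δ.erase (Formula.imp A B))) none
      rw [Multiset.cons_swap A (Formula.box A') Γ, Multiset.cons_swap A A' (Formula.box A' ::ₘ Γ),
        Multiset.cons_swap A (Formula.box A') Γ]
      exact Inst.refl _ _ A'
    · intro t ht
      injection ht with ht
      rw [← ht]
      exact hCm
  | box Γ Δ A' P =>
    have hCm : Formula.imp A B ∈ Δ := by
      rcases Multiset.mem_cons.mp hΦ with h | h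
      · exact absurd h (by simp)
      · exact h
    refine ⟨?_, ?_, ?_⟩
    · show Inst Rule.box
        (A ::ₘ (Γ + boxed P), B ::ₘ (Formula.box A' ::ₘ Δ).erase (Formula.imp A B))
        (some (A ::ₘ (Γ + boxed P), B ::ₘ (A' ::ₘ Δ).erase (Formula.imp A B)))
        (some (boxed P, {A'}))
      rw [erase_cons_of_mem hCm, erase_cons_of_mem hCm,
        Multiset.cons_swap B (Formula.box A') (Δ.erase (Formula.imp A B)),
        Multiset.cons_swap B A' (Δ.erase (Formula.imp A B)),
        show A ::ₘ (Γ + boxed P) = (A ::ₘ Γ) + boxed P from (Multiset.cons_add _ _ _).symm]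
      exact Inst.box _ _ A' P
    · intro t ht
      injection ht with ht
      rw [← ht]
      exact Multiset.mem_cons_of_mem hCm
    · intro t _ hbox
      exact absurd rfl hbox
  | cut Γ Δ E =>
    have hCm : Formula.imp A B ∈ Δ := hΦ
    refine ⟨?_, ?_, ?_⟩
    · show Inst Rule.cut (A ::ₘ Γ, B ::ₘ Δ.erase (Formula.imp A B))
        (some (A ::ₘ Γ, B ::ₘ (E ::ₘ Δ).erase (Formula.imp A B)))
        (some (A ::ₘ E ::ₘ Γ, B ::ₘ Δ.erase (Formula.imp A B)))
      rw [erase_cons_of_mem hCm, Multiset.cons_swap B E (Δ.erase (Formula.imp A B)),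
        Multiset.cons_swap A E Γ]
      exact Inst.cut _ _ E
    · intro t ht
      injection ht with ht
      rw [← ht]
      exact Multiset.mem_cons_of_mem hCm
    · intro t ht _
      injection ht with ht
      rw [← ht]
      exact hCm

lemma compat4 :
    Compat (ρ := fun s => (s.1, s.2.erase Formula.bot)) (R₀ := none) (g := false)
      (fun s => Formula.bot ∈ s.2) := by
  intro r s p₁ p₂ hinst hΦ _
  cases hinst with
  | ax Γ Δ p =>
    have hCm : Formula.bot ∈ Δ := by
      rcases Multiset.mem_cons.mp hΦ with h | h
      · exact absurd h (by simp)
      · exact h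
    refine ⟨?_, by simp, by simp⟩
    show Inst Rule.ax (Formula.atom p ::ₘ Γ, (Formula.atom p ::ₘ Δ).erase Formula.bot) none none
    rw [erase_cons_of_mem hCm]
    exact Inst.ax _ _ p
  | axBot Γ Δ =>
    refine ⟨?_, by simp, by simp⟩
    exact Inst.axBot _ _
  | impL Γ Δ A' B' =>
    have hCm : Formula.bot ∈ Δ := hΦ
    refine ⟨?_, ?_, ?_⟩
    · show Inst Rule.impL (Formula.imp A' B' ::ₘ Γ, Δ.erase Formula.bot)
        (some (B' ::ₘ Γ, Δ.erase Formula.bot))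
        (some (Γ, (A' ::ₘ Δ).erase Formula.bot))
      rw [erase_cons_of_mem hCm]
      exact Inst.impL _ _ A' B'
    · intro t ht
      injection ht with ht
      rw [← ht]
      exact hCm
    · intro t ht _
      injection ht with ht
      rw [← ht]
      exact Multiset.mem_cons_of_mem hCm
  | impR Γ Δ A' B' =>
    have hCm : Formula.bot ∈ Δ := by
      rcases Multiset.mem_cons.mp hΦ with h | h
      · exact absurd h (by simp)
      · exact h
    refine ⟨?_, ?_, by simp⟩
    · show Inst Rule.impR (Γ, (Formula.imp A' B' ::ₘ Δ).erase Formula.bot)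
        (some (A' ::ₘ Γ, (B' ::ₘ Δ).erase Formula.bot)) none
      rw [erase_cons_of_mem hCm, erase_cons_of_mem hCm]
      exact Inst.impR _ _ A' B'
    · intro t ht
      injection ht with ht
      rw [← ht]
      exact Multiset.mem_cons_of_mem hCm
  | refl Γ Δ A' =>
    have hCm : Formula.bot ∈ Δ := hΦ
    refine ⟨?_, ?_, by simp⟩
    · exact Inst.refl _ _ A'
    · intro t ht
      injection ht with ht
      rw [← ht]
      exact hCm
  | box Γ Δ A' P =>
    have hCm : Formula.bot ∈ Δ := by
      rcases Multiset.mem_cons.mp hΦ with h | h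
      · exact absurd h (by simp)
      · exact h
    refine ⟨?_, ?_, ?_⟩
    · show Inst Rule.box (Γ + boxed P, (Formula.box A' ::ₘ Δ).erase Formula.bot)
        (some (Γ + boxed P, (A' ::ₘ Δ).erase Formula.bot))
        (some (boxed P, {A'}))
      rw [erase_cons_of_mem hCm, erase_cons_of_mem hCm]
      exact Inst.box _ _ A' P
    · intro t ht
      injection ht with ht
      rw [← ht]
      exact Multiset.mem_cons_of_mem hCm
    · intro t _ hbox
      exact absurd rfl hbox
  | cut Γ Δ E =>
    have hCm : Formula.bot ∈ Δ := hΦ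
    refine ⟨?_, ?_, ?_⟩
    · show Inst Rule.cut (Γ, Δ.erase Formula.bot)
        (some (Γ, (E ::ₘ Δ).erase Formula.bot))
        (some (E ::ₘ Γ, Δ.erase Formula.bot))
      rw [erase_cons_of_mem hCm]
      exact Inst.cut _ _ E
    · intro t ht
      injection ht with ht
      rw [← ht]
      exact Multiset.mem_cons_of_mem hCm
    · intro t ht _
      injection ht with ht
      rw [← ht]
      exact hCm

lemma compat5 (A : Formula) :
    Compat (ρ := fun s => (s.1, A ::ₘ s.2.erase (Formula.box A))) (R₀ := some Rule.box)
      (g := false) (fun s => Formula.box A ∈ s.2) := by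
  intro r s p₁ p₂ hinst hΦ hng
  cases hinst with
  | ax Γ Δ p =>
    have hCm : Formula.box A ∈ Δ := by
      rcases Multiset.mem_cons.mp hΦ with h | h
      · exact absurd h (by simp)
      · exact h
    refine ⟨?_, by simp, by simp⟩
    show Inst Rule.ax
      (Formula.atom p ::ₘ Γ, A ::ₘ (Formula.atom p ::ₘ Δ).erase (Formula.box A)) none none
    rw [erase_cons_of_mem hCm, Multiset.cons_swap A (Formula.atom p) (Δ.erase (Formula.box A))]
    exact Inst.ax _ _ p
  | axBot Γ Δ =>
    refine ⟨?_, by simp, by simp⟩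
    exact Inst.axBot _ _
  | impL Γ Δ A' B' =>
    have hCm : Formula.box A ∈ Δ := hΦ
    refine ⟨?_, ?_, ?_⟩
    · show Inst Rule.impL (Formula.imp A' B' ::ₘ Γ, A ::ₘ Δ.erase (Formula.box A))
        (some (B' ::ₘ Γ, A ::ₘ Δ.erase (Formula.box A)))
        (some (Γ, A ::ₘ (A' ::ₘ Δ).erase (Formula.box A)))
      rw [erase_cons_of_mem hCm, Multiset.cons_swap A A' (Δ.erase (Formula.box A))]
      exact Inst.impL _ _ A' B'
    · intro t ht
      injection ht with ht
      rw [← ht]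
      exact hCm
    · intro t ht _
      injection ht with ht
      rw [← ht]
      exact Multiset.mem_cons_of_mem hCm
  | impR Γ Δ A' B' =>
    have hCm : Formula.box A ∈ Δ := by
      rcases Multiset.mem_cons.mp hΦ with h | h
      · exact absurd h (by simp)
      · exact h
    refine ⟨?_, ?_, by simp⟩
    · show Inst Rule.impR (Γ, A ::ₘ (Formula.imp A' B' ::ₘ Δ).erase (Formula.box A))
        (some (A' ::ₘ Γ, A ::ₘ (B' ::ₘ Δ).erase (Formula.box A))) none
      rw [erase_cons_of_mem hCm, erase_cons_of_mem hCm,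
        Multiset.cons_swap A (Formula.imp A' B') (Δ.erase (Formula.box A)),
        Multiset.cons_swap A B' (Δ.erase (Formula.box A))]
      exact Inst.impR _ _ A' B'
    · intro t ht
      injection ht with ht
      rw [← ht]
      exact Multiset.mem_cons_of_mem hCm
  | refl Γ Δ A' =>
    have hCm : Formula.box A ∈ Δ := hΦ
    refine ⟨?_, ?_, by simp⟩
    · exact Inst.refl _ _ A'
    · intro t ht
      injection ht with ht
      rw [← ht]
      exact hCm
  | box Γ Δ A' P =>
    have hne : Formula.box A' ≠ Formula.box A := by
      intro he
      apply hng
      refine ⟨rfl, ?_⟩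
      show some (Γ + boxed P, A' ::ₘ Δ)
        = some (Γ + boxed P, A ::ₘ (Formula.box A' ::ₘ Δ).erase (Formula.box A))
      rw [he, Multiset.erase_cons_head]
      injection he with h1
      rw [h1]
    have hCm : Formula.box A ∈ Δ := by
      rcases Multiset.mem_cons.mp hΦ with h | h
      · exact absurd h.symm hne
      · exact h
    refine ⟨?_, ?_, ?_⟩
    · show Inst Rule.box (Γ + boxed P, A ::ₘ (Formula.box A' ::ₘ Δ).erase (Formula.box A))
        (some (Γ + boxed P, A ::ₘ (A' ::ₘ Δ).erase (Formula.box A)))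
        (some (boxed P, {A'}))
      rw [erase_cons_of_mem hCm, erase_cons_of_mem hCm,
        Multiset.cons_swap A (Formula.box A') (Δ.erase (Formula.box A)),
        Multiset.cons_swap A A' (Δ.erase (Formula.box A))]
      exact Inst.box _ _ A' P
    · intro t ht
      injection ht with ht
      rw [← ht]
      exact Multiset.mem_cons_of_mem hCm
    · intro t _ hbox
      exact absurd rfl hbox
  | cut Γ Δ E =>
    have hCm : Formula.box A ∈ Δ := hΦ
    refine ⟨?_, ?_, ?_⟩
    · show Inst Rule.cut (Γ, A ::ₘ Δ.erase (Formula.box A))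
        (some (Γ, A ::ₘ (E ::ₘ Δ).erase (Formula.box A)))
        (some (E ::ₘ Γ, A ::ₘ Δ.erase (Formula.box A)))
      rw [erase_cons_of_mem hCm, Multiset.cons_swap A E (Δ.erase (Formula.box A))]
      exact Inst.cut _ _ E
    · intro t ht
      injection ht with ht
      rw [← ht]
      exact Multiset.mem_cons_of_mem hCm
    · intro t ht _
      injection ht with ht
      rw [← ht]
      exact hCm

end main

end Inv

/-- the five inversion rules are strongly admissible in Grz∞ + cut. -/
theorem inversion_strongly_admissible (A B : Formula) :
    (∃ f : InfProof → InfProof, Adequate f ∧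
      ∀ (π : InfProof) (Γ Δ : Multiset Formula),
        Proves π (Formula.imp A B ::ₘ Γ, Δ) → Proves (f π) (B ::ₘ Γ, Δ)) ∧
    (∃ f : InfProof → InfProof, Adequate f ∧
      ∀ (π : InfProof) (Γ Δ : Multiset Formula),
        Proves π (Formula.imp A B ::ₘ Γ, Δ) → Proves (f π) (Γ, A ::ₘ Δ)) ∧
    (∃ f : InfProof → InfProof, Adequate f ∧
      ∀ (π : InfProof) (Γ Δ : Multiset Formula),
        Proves π (Γ, Formula.imp A B ::ₘ Δ) → Proves (f π) (A ::ₘ Γ, B ::ₘ Δ)) ∧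
    (∃ f : InfProof → InfProof, Adequate f ∧
      ∀ (π : InfProof) (Γ Δ : Multiset Formula),
        Proves π (Γ, Formula.bot ::ₘ Δ) → Proves (f π) (Γ, Δ)) ∧
    (∃ f : InfProof → InfProof, Adequate f ∧
      ∀ (π : InfProof) (Γ Δ : Multiset Formula),
        Proves π (Γ, Formula.box A ::ₘ Δ) → Proves (f π) (Γ, A ::ₘ Δ)) := by
  refine ⟨⟨Inv.invMap _ (Inv.compat1 A B), ?_, ?_⟩,
    ⟨Inv.invMap _ (Inv.compat2 A B), ?_, ?_⟩,
    ⟨Inv.invMap _ (Inv.compat3 A B), ?_, ?_⟩,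
    ⟨Inv.invMap _ Inv.compat4, ?_, ?_⟩,
    ⟨Inv.invMap _ (Inv.compat5 A), ?_, ?_⟩⟩
  · exact Inv.invMap_adequate _ (by simp) (by rintro (h | h | h) <;> simp at h)
  · intro π Γ Δ hp
    have hS : Formula.imp A B ∈ (Formula.imp A B ::ₘ Γ, Δ).1 := Multiset.mem_cons_self _ _
    have h2 := Inv.invMap_proves (hc := Inv.compat1 A B) hp hS
    simpa [Multiset.erase_cons_head] using h2
  · exact Inv.invMap_adequate _ (by simp) (by rintro (h | h | h) <;> simp at h)
  · intro π Γ Δ hp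
    have hS : Formula.imp A B ∈ (Formula.imp A B ::ₘ Γ, Δ).1 := Multiset.mem_cons_self _ _
    have h2 := Inv.invMap_proves (hc := Inv.compat2 A B) hp hS
    simpa [Multiset.erase_cons_head] using h2
  · exact Inv.invMap_adequate _ (by simp) (fun _ => rfl)
  · intro π Γ Δ hp
    have hS : Formula.imp A B ∈ (Γ, Formula.imp A B ::ₘ Δ).2 := Multiset.mem_cons_self _ _
    have h2 := Inv.invMap_proves (hc := Inv.compat3 A B) hp hS
    simpa [Multiset.erase_cons_head] using h2
  · exact Inv.invMap_adequate _ (by simp) (fun _ => rfl)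
  · intro π Γ Δ hp
    have hS : Formula.bot ∈ (Γ, Formula.bot ::ₘ Δ).2 := Multiset.mem_cons_self _ _
    have h2 := Inv.invMap_proves (hc := Inv.compat4) hp hS
    simpa [Multiset.erase_cons_head] using h2
  · exact Inv.invMap_adequate _ (by simp) (fun _ => rfl)
  · intro π Γ Δ hp
    have hS : Formula.box A ∈ (Γ, Formula.box A ::ₘ Δ).2 := Multiset.mem_cons_self _ _
    have h2 := Inv.invMap_proves (hc := Inv.compat5 A) hp hS
    simpa [Multiset.erase_cons_head] using h2
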